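/- Let r, s be positive integers with r ≤ s ≤ (a/2)·r for an integer a ≥ 3, and set α = r·α₁ + s·α₂ with symmetric bilinear form (α₁|α₁) = (α₂|α₂) = 2, (α₁|α₂) = −a. Then 1 − (α|α)/2 = 1 + a·r·s − r² − s² ≥ 1 + ((a²−4)/(2a))·r·s ≥ r − 1 + r·s/2. -/
import Mathlib


/-- For positive integers `r ≤ s ≤ (a/2) r` with `a ≥ 3`, and
`(α|α) = 2r² - 2ars + 2s²`, the chain
`1 - (α|α)/2 = 1 + ars - r² - s² ≥ 1 + ((a²-4)/(2a)) rs ≥ r - 1 + rs/2` holds. -/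
theorem stmt7 (a r s : ℤ) (ha : 3 ≤ a) (hr : 0 < r) (hs : 0 < s)
    (hrs : r ≤ s) (hsa : (s : ℚ) ≤ (a : ℚ) / 2 * (r : ℚ)) :
    (1 : ℚ) - (2 * (r : ℚ) ^ 2 - 2 * (a : ℚ) * r * s + 2 * (s : ℚ) ^ 2) / 2
        = 1 + (a : ℚ) * r * s - (r : ℚ) ^ 2 - (s : ℚ) ^ 2 ∧
    1 + (a : ℚ) * r * s - (r : ℚ) ^ 2 - (s : ℚ) ^ 2
        ≥ 1 + (((a : ℚ) ^ 2 - 4) / (2 * (a : ℚ))) * ((r : ℚ) * (s : ℚ)) ∧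
    1 + (((a : ℚ) ^ 2 - 4) / (2 * (a : ℚ))) * ((r : ℚ) * (s : ℚ))
        ≥ (r : ℚ) - 1 + (r : ℚ) * (s : ℚ) / 2 := by
  have ha' : (3 : ℚ) ≤ (a : ℚ) := by exact_mod_cast ha
  have hr' : (1 : ℚ) ≤ (r : ℚ) := by exact_mod_cast hr
  have hs' : (1 : ℚ) ≤ (s : ℚ) := by exact_mod_cast hs
  have hrs' : (r : ℚ) ≤ (s : ℚ) := by exact_mod_cast hrs
  have hapos : (0 : ℚ) < 2 * (a : ℚ) := by linarith
  have h1 : (0 : ℚ) ≤ (a : ℚ) * s - 2 * r := by nlinarith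
  have h2 : (0 : ℚ) ≤ (a : ℚ) * r - 2 * s := by linarith
  refine ⟨by ring, ?_, ?_⟩
  · rw [ge_iff_le, ← sub_nonneg]
    have key : 1 + (a : ℚ) * r * s - (r : ℚ) ^ 2 - (s : ℚ) ^ 2
        - (1 + ((a : ℚ) ^ 2 - 4) / (2 * a) * (r * s))
        = (((a : ℚ) * s - 2 * r) * ((a : ℚ) * r - 2 * s)) / (2 * a) := by
      field_simp; ring
    rw [key]
    exact div_nonneg (mul_nonneg h1 h2) hapos.le
  · rw [ge_iff_le, ← sub_nonneg]
    have key : 1 + ((a : ℚ) ^ 2 - 4) / (2 * a) * (r * s) - (r - 1 + r * s / 2)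
        = (((a : ℚ) ^ 2 - a - 4) * (r * s) + 2 * a * (2 - r)) / (2 * a) := by
      field_simp; ring
    rw [key]
    apply div_nonneg _ hapos.le
    nlinarith [mul_nonneg (sub_nonneg.2 ha') (sub_nonneg.2 (one_le_mul_of_one_le_of_one_le hr' hs')), sq_nonneg ((r : ℚ) - 2)]
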